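/- If f : {0,1}^n → {0,1}^n has an acyclic interaction graph, with unique fixed point y, then for every configuration x the asynchronous graph Γ(f) contains a path from x to y of length exactly the Hamming distance d_H(x,y) (a geodesic). -/

import Mathlib

/-- One asynchronous update step of the Boolean network `f`. -/
def Step {I : Type*} [DecidableEq I] (f : (I → Bool) → I → Bool) (x y : I → Bool) : Prop :=
  ∃ i, f x i ≠ x i ∧ y = Function.update x i (f x i)

/-- `Γ(f)` has a path from `x` to `y` of length `l`. -/
def PathLen {I : Type*} [DecidableEq I] (f : (I → Bool) → I → Bool)
    (x y : I → Bool) (l : ℕ) : Prop :=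
  ∃ p : ℕ → I → Bool, p 0 = x ∧ p l = y ∧ ∀ k < l, Step f (p k) (p (k + 1))

/-- Positive arc from `j` to `i` in the interaction graph `G(f)`. -/
def PosArc {n : ℕ} (f : (Fin n → Bool) → Fin n → Bool) (j i : Fin n) : Prop :=
  ∃ x, f (Function.update x j true) i = true ∧ f (Function.update x j false) i = false

/-- Negative arc from `j` to `i` in the interaction graph `G(f)`. -/
def NegArc {n : ℕ} (f : (Fin n → Bool) → Fin n → Bool) (j i : Fin n) : Prop :=
  ∃ x, f (Function.update x j true) i = false ∧ f (Function.update x j false) i = true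

/-- Arc in the underlying unsigned digraph of `G(f)`. -/
def Arc {n : ℕ} (f : (Fin n → Bool) → Fin n → Bool) (j i : Fin n) : Prop :=
  PosArc f j i ∨ NegArc f j i

/-- The interaction graph `G(f)` is acyclic (no directed cycle, including loops). -/
def AcyclicIG {n : ℕ} (f : (Fin n → Bool) → Fin n → Bool) : Prop :=
  ∀ i, ¬ Relation.TransGen (Arc f) i i

/-- Hamming distance. -/
def ham {n : ℕ} (x y : Fin n → Bool) : ℕ :=
  (Finset.univ.filter fun i => x i ≠ y i).card

/-- Componentwise negation. -/
def negc {n : ℕ} (x : Fin n → Bool) : Fin n → Bool := fun i => !(x i)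

/-- Number of ones (weight). -/
def wt {n : ℕ} (x : Fin n → Bool) : ℕ :=
  (Finset.univ.filter fun i => x i = true).card

/-- `x` with coordinate `i` flipped. -/
def flipAt {n : ℕ} (x : Fin n → Bool) (i : Fin n) : Fin n → Bool :=
  Function.update x i (!(x i))

/-- `G(f)` has no negative loops. -/
def NoNegLoop {n : ℕ} (f : (Fin n → Bool) → Fin n → Bool) : Prop :=
  ∀ i, ¬ NegArc f i i

/-- First-half components of the embedding construction `f'`. -/
def F1 {n : ℕ} (f : (Fin n → Bool) → Fin n → Bool) (x y : Fin n → Bool) (i : Fin n) : Bool :=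
  if y = negc x ∨ flipAt y i = negc x then f x i
  else if wt x + wt y = n then !(x i)
  else if wt x + wt y = n + 1 then true
  else if wt x + wt y + 1 = n then false
  else if n + 2 ≤ wt x + wt y then true
  else false

/-- The embedding construction `f' : {0,1}^{2n} → {0,1}^{2n}`, with the `2n`
coordinates indexed by `Fin n ⊕ Fin n`. -/
def Fext {n : ℕ} (f : (Fin n → Bool) → Fin n → Bool) (z : (Fin n ⊕ Fin n) → Bool) :
    (Fin n ⊕ Fin n) → Bool :=
  Sum.elim (fun i => F1 f (z ∘ Sum.inl) (z ∘ Sum.inr) i)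
           (fun i => !(F1 f (negc (z ∘ Sum.inr)) (negc (z ∘ Sum.inl)) i))

/-- Concatenation `(x, y) ∈ {0,1}^{2n}`. -/
def pair {n : ℕ} (x y : Fin n → Bool) : (Fin n ⊕ Fin n) → Bool := Sum.elim x y

section Aux

variable {n : ℕ} (f : (Fin n → Bool) → Fin n → Bool)

lemma no_arc_update {j i : Fin n} (h : ¬ Arc f j i) (x : Fin n → Bool) (b : Bool) :
    f (Function.update x j b) i = f x i := by
  have key : ∀ z : Fin n → Bool,
      f (Function.update z j true) i = f (Function.update z j false) i := by
    intro z
    by_contra hne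
    apply h
    cases h1 : f (Function.update z j true) i <;>
      cases h2 : f (Function.update z j false) i <;>
      simp [h1, h2] at hne
    · exact Or.inr ⟨z, h1, h2⟩
    · exact Or.inl ⟨z, h1, h2⟩
  have hx : f (Function.update x j (x j)) i = f x i := by
    rw [Function.update_eq_self]
  calc f (Function.update x j b) i = f (Function.update x j (x j)) i := by
        cases b <;> cases hxj : x j <;> simp [key x]
    _ = f x i := by rw [Function.update_eq_self]

lemma agree (i : Fin n) : ∀ (k : ℕ) (x y : Fin n → Bool), ham x y ≤ k →
    (∀ j, x j ≠ y j → ¬ Arc f j i) → f x i = f y i := by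
  intro k
  induction k with
  | zero =>
    intro x y hk _
    have : x = y := by
      funext j
      by_contra hj
      have : j ∈ Finset.univ.filter fun j => x j ≠ y j := by simp [hj]
      simp [ham, Finset.card_eq_zero] at hk
      exact hj (@hk j)
    rw [this]
  | succ k ih =>
    intro x y hk harc
    by_cases hxy : x = y
    · rw [hxy]
    · obtain ⟨j, hj⟩ : ∃ j, x j ≠ y j := by
        by_contra h
        push_neg at h
        exact hxy (funext fun j => h j)
      set x' := Function.update x j (y j) with hx'
      have hfx : f x' i = f x i := no_arc_update f (harc j hj) x (y j)
      have hsubset : (Finset.univ.filter fun j' => x' j' ≠ y j')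
          = (Finset.univ.filter fun j' => x j' ≠ y j').erase j := by
        ext j'
        by_cases hjj : j' = j <;> simp [hx', Function.update, hjj]
      have hlt : ham x' y < ham x y := by
        rw [ham, hsubset, ham]
        exact Finset.card_erase_lt_of_mem (by simp [hj])
      have harc' : ∀ j', x' j' ≠ y j' → ¬ Arc f j' i := by
        intro j' hj'
        apply harc
        by_cases hjj : j' = j
        · subst hjj; simp [hx'] at hj'
        · simpa [hx', Function.update, hjj] using hj'
      rw [← hfx]
      exact ih x' y (by omega) harc'

lemma pathlen_cons {I : Type*} [DecidableEq I] {f : (I → Bool) → I → Bool}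
    {x x' y : I → Bool} {l : ℕ} (h : Step f x x') (hp : PathLen f x' y l) :
    PathLen f x y (l + 1) := by
  obtain ⟨p, hp0, hpl, hps⟩ := hp
  refine ⟨fun k => match k with | 0 => x | k + 1 => p k, rfl, hpl, ?_⟩
  intro k hk
  match k with
  | 0 => simpa [hp0] using h
  | k + 1 => exact hps k (by omega)

end Aux

theorem stmt_2 {n : ℕ} (f : (Fin n → Bool) → Fin n → Bool)
    (hG : AcyclicIG f) (y : Fin n → Bool) (hy : f y = y)
    (huniq : ∀ z, f z = z → z = y) :
    ∀ x, PathLen f x y (ham x y) := by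
  have hwf : WellFounded (Relation.TransGen (Arc f)) := by
    have : IsIrrefl (Fin n) (Relation.TransGen (Arc f)) := ⟨hG⟩
    exact Finite.wellFounded_of_trans_of_irrefl _
  suffices h : ∀ (k : ℕ) (x : Fin n → Bool), ham x y ≤ k → PathLen f x y (ham x y) by
    intro x; exact h (ham x y) x le_rfl
  intro k
  induction k with
  | zero =>
    intro x hk
    have hx : ham x y = 0 := Nat.le_zero.mp hk
    have : x = y := by
      funext j
      by_contra hj
      have hmem : j ∈ Finset.univ.filter fun j => x j ≠ y j := by simp [hj]
      simp [ham, Finset.card_eq_zero] at hx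
      exact hj (@hx j)
    rw [hx]
    exact ⟨fun _ => y, this.symm, rfl, fun k hk => absurd hk (by omega)⟩
  | succ k ih =>
    intro x hk
    by_cases h0 : ham x y ≤ k
    · exact ih x h0
    · -- ham x y = k + 1 > 0, pick a minimal differing coordinate
      have hpos : 0 < ham x y := by omega
      set D : Set (Fin n) := {j | x j ≠ y j} with hD
      have hDne : D.Nonempty := by
        rw [Set.nonempty_iff_ne_empty]
        intro h
        have : x = y := funext fun j => by
          by_contra hj
          have hjD : j ∈ D := hj
          rw [h] at hjD
          exact hjD
        have : ham x y = 0 := by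
          simp [ham, this, Finset.filter_false_of_mem]
        omega
      obtain ⟨m, hmD, hmin⟩ := hwf.has_min D hDne
      have harc : ∀ j, x j ≠ y j → ¬ Arc f j m := fun j hj ha =>
        hmin j hj (Relation.TransGen.single ha)
      have hfm : f x m = y m := by
        rw [agree f m (ham x y) x y le_rfl harc, hy]
      have hstep : Step f x (Function.update x m (f x m)) :=
        ⟨m, by rw [hfm]; exact fun h => hmD h.symm, rfl⟩
      set x' := Function.update x m (f x m) with hx'
      have hx'y : ham x' y = ham x y - 1 := by
        have hsub : (Finset.univ.filter fun j' => x' j' ≠ y j')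
            = (Finset.univ.filter fun j' => x j' ≠ y j').erase m := by
          ext j'
          by_cases hjj : j' = m <;> simp [hx', Function.update, hjj, hfm]
        rw [ham, hsub, Finset.card_erase_of_mem (by simp [show x m ≠ y m from hmD])]
        rfl
      have hpath : PathLen f x' y (ham x' y) := ih x' (by omega)
      have : PathLen f x y (ham x' y + 1) := pathlen_cons hstep hpath
      have heq : ham x' y + 1 = ham x y := by omega
      rwa [heq] at this
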